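/- Descent lemma with biased and noisy gradients: Let F be L-smooth, let w⁺ = w - η g where g = ∇F(w) + b + n with E[n] = 0, E‖n‖² ≤ M‖∇F(w) + b‖² + σ², and ‖b‖² ≤ m‖∇F(w)‖² + ζ² with 0 ≤ m < 1. If 0 < η ≤ 1/((M+1)L), then E[F(w⁺)] - F(w) ≤ (η(m-1)/2)‖∇F(w)‖² + (η/2)ζ² + (η²L/2)σ². -/

import Mathlib

open MeasureTheory

local notation "⟪" x ", " y "⟫" => @inner ℝ _ _ x y

/-- Descent lemma for L-smooth functions. -/
lemma smooth_descent_aux {d : ℕ} (F : EuclideanSpace ℝ (Fin d) → ℝ) (L : ℝ) (hL : 0 ≤ L)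
    (hdiff : Differentiable ℝ F)
    (hlip : ∀ x y, ‖gradient F x - gradient F y‖ ≤ L * ‖x - y‖)
    (x y : EuclideanSpace ℝ (Fin d)) :
    F y ≤ F x + ⟪gradient F x, y - x⟫ + L / 2 * ‖y - x‖ ^ 2 := by
  set v := y - x with hv
  have key : ∀ t : ℝ, HasDerivAt (fun t : ℝ => F (x + t • v))
      ⟪gradient F (x + t • v), v⟫ t := by
    intro t
    have h1 : HasDerivAt (fun t : ℝ => x + t • v) v t := by
      simpa using ((hasDerivAt_id t).smul_const v).const_add x
    have h2 := ((hdiff (x + t • v)).hasGradientAt).hasFDerivAt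
    have h3 := h2.comp_hasDerivAt t h1
    simp [InnerProductSpace.toDual_apply_apply] at h3 ⊢
    exact h3
  set ψ : ℝ → ℝ := fun t =>
    F (x + t • v) - t * ⟪gradient F x, v⟫ - t ^ 2 * (L / 2 * ‖v‖ ^ 2) with hψ
  have ψdiff : ∀ t : ℝ, HasDerivAt ψ
      (⟪gradient F (x + t • v), v⟫ - ⟪gradient F x, v⟫ - 2 * t * (L / 2 * ‖v‖ ^ 2)) t := by
    intro t
    have hA : HasDerivAt (fun t : ℝ => t * ⟪gradient F x, v⟫) ⟪gradient F x, v⟫ t :=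
      hasDerivAt_mul_const _
    have hB : HasDerivAt (fun t : ℝ => t ^ 2 * (L / 2 * ‖v‖ ^ 2))
        (2 * t * (L / 2 * ‖v‖ ^ 2)) t := by
      simpa using (hasDerivAt_pow 2 t).mul_const (L / 2 * ‖v‖ ^ 2)
    exact ((key t).sub hA).sub hB
  have hanti : AntitoneOn ψ (Set.Icc 0 1) := by
    apply antitoneOn_of_deriv_nonpos (convex_Icc 0 1)
    · exact Continuous.continuousOn (by
        have : Differentiable ℝ ψ := fun t => (ψdiff t).differentiableAt
        exact this.continuous)
    · intro t _
      exact (ψdiff t).differentiableAt.differentiableWithinAt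
    · intro t ht
      rw [interior_Icc] at ht
      rw [(ψdiff t).deriv]
      have hsub : (x + t • v) - x = t • v := by abel
      have hlt := hlip (x + t • v) x
      rw [hsub] at hlt
      have hnorm : ‖t • v‖ = t * ‖v‖ := by
        rw [norm_smul, Real.norm_eq_abs, abs_of_pos ht.1]
      have hinner : ⟪gradient F (x + t • v), v⟫ - ⟪gradient F x, v⟫
          = ⟪gradient F (x + t • v) - gradient F x, v⟫ := by
        rw [inner_sub_left]
      rw [hinner]
      have hle : ⟪gradient F (x + t • v) - gradient F x, v⟫ ≤
          (L * (t * ‖v‖)) * ‖v‖ := by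
        calc ⟪gradient F (x + t • v) - gradient F x, v⟫
            ≤ ‖gradient F (x + t • v) - gradient F x‖ * ‖v‖ := real_inner_le_norm _ _
          _ ≤ (L * (t * ‖v‖)) * ‖v‖ := by
              apply mul_le_mul_of_nonneg_right _ (norm_nonneg _)
              rw [← hnorm]; exact hlt
      nlinarith [norm_nonneg v, ht.1.le]
  have h01 := hanti (Set.left_mem_Icc.mpr zero_le_one) (Set.right_mem_Icc.mpr zero_le_one)
    zero_le_one
  have h0 : ψ 0 = F x := by simp [hψ]
  have h1 : ψ 1 = F y - ⟪gradient F x, v⟫ - L / 2 * ‖v‖ ^ 2 := by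
    have hxy : x + v = y := by rw [hv]; abel
    simp [hψ, hxy]
  rw [h0, h1] at h01
  linarith

/-- Descent lemma with biased and noisy gradients. -/
theorem descent_lemma_biased_noisy
    {d : ℕ} {Ω : Type*} [MeasurableSpace Ω] (μ : Measure Ω) [IsProbabilityMeasure μ]
    (F : EuclideanSpace ℝ (Fin d) → ℝ) (L : ℝ) (hL : 0 < L)
    (hdiff : Differentiable ℝ F)
    (hlip : ∀ x y, ‖gradient F x - gradient F y‖ ≤ L * ‖x - y‖)
    (w : EuclideanSpace ℝ (Fin d)) (b : EuclideanSpace ℝ (Fin d))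
    (n : Ω → EuclideanSpace ℝ (Fin d))
    (M σ2 m ζ2 η : ℝ) (hM : 0 ≤ M) (hσ2 : 0 ≤ σ2) (hm0 : 0 ≤ m) (hm1 : m < 1)
    (hζ2 : 0 ≤ ζ2)
    (hn_int : Integrable n μ)
    (hn_mean : ∫ ω, n ω ∂μ = 0)
    (hn_sq_int : Integrable (fun ω => ‖n ω‖ ^ 2) μ)
    (hn_var : ∫ ω, ‖n ω‖ ^ 2 ∂μ ≤ M * ‖gradient F w + b‖ ^ 2 + σ2)
    (hb : ‖b‖ ^ 2 ≤ m * ‖gradient F w‖ ^ 2 + ζ2)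
    (hη0 : 0 < η) (hη : η ≤ 1 / ((M + 1) * L))
    (hF_int : Integrable (fun ω => F (w - η • (gradient F w + b + n ω))) μ) :
    (∫ ω, F (w - η • (gradient F w + b + n ω)) ∂μ) - F w ≤
      η * (m - 1) / 2 * ‖gradient F w‖ ^ 2 + η / 2 * ζ2 + η ^ 2 * L / 2 * σ2 := by
  set g := gradient F w with hg
  set c := g + b with hc
  -- pointwise descent bound
  have hpoint : ∀ ω, F (w - η • (c + n ω)) ≤
      (F w - η * ⟪g, c⟫ + L * η ^ 2 / 2 * ‖c‖ ^ 2)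
      + (-η) * ⟪g, n ω⟫ + (L * η ^ 2) * ⟪c, n ω⟫ + (L * η ^ 2 / 2) * ‖n ω‖ ^ 2 := by
    intro ω
    have := smooth_descent_aux F L hL.le hdiff hlip w (w - η • (c + n ω))
    have hsub : w - η • (c + n ω) - w = -(η • (c + n ω)) := by abel
    rw [hsub] at this
    have hinner : ⟪g, -(η • (c + n ω))⟫ = -η * (⟪g, c⟫ + ⟪g, n ω⟫) := by
      rw [inner_neg_right, real_inner_smul_right, inner_add_right]; ring
    have hnorm : ‖-(η • (c + n ω))‖ ^ 2 = η ^ 2 * (‖c‖ ^ 2 + 2 * ⟪c, n ω⟫ + ‖n ω‖ ^ 2) := by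
      rw [norm_neg, norm_smul, mul_pow, norm_add_sq_real, Real.norm_eq_abs, sq_abs]
    rw [hinner, hnorm] at this
    calc F (w - η • (c + n ω)) ≤ F w + -η * (⟪g, c⟫ + ⟪g, n ω⟫)
          + L / 2 * (η ^ 2 * (‖c‖ ^ 2 + 2 * ⟪c, n ω⟫ + ‖n ω‖ ^ 2)) := this
      _ = (F w - η * ⟪g, c⟫ + L * η ^ 2 / 2 * ‖c‖ ^ 2)
          + (-η) * ⟪g, n ω⟫ + (L * η ^ 2) * ⟪c, n ω⟫ + (L * η ^ 2 / 2) * ‖n ω‖ ^ 2 := by ring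
  -- integrability of the RHS
  have hint1 : Integrable (fun ω => ⟪g, n ω⟫) μ := hn_int.const_inner g
  have hint2 : Integrable (fun ω => ⟪c, n ω⟫) μ := hn_int.const_inner c
  have hRHS_int : Integrable (fun ω =>
      (F w - η * ⟪g, c⟫ + L * η ^ 2 / 2 * ‖c‖ ^ 2)
      + (-η) * ⟪g, n ω⟫ + (L * η ^ 2) * ⟪c, n ω⟫ + (L * η ^ 2 / 2) * ‖n ω‖ ^ 2) μ := by
    exact (((integrable_const _).add (hint1.const_mul _)).add
      (hint2.const_mul _)).add (hn_sq_int.const_mul _)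
  have hmono := integral_mono hF_int hRHS_int hpoint
  -- compute the integral of the RHS
  have hzero1 : ∫ ω, ⟪g, n ω⟫ ∂μ = 0 := by
    rw [integral_inner hn_int, hn_mean, inner_zero_right]
  have hzero2 : ∫ ω, ⟪c, n ω⟫ ∂μ = 0 := by
    rw [integral_inner hn_int, hn_mean, inner_zero_right]
  have hi1 : Integrable (fun ω => (F w - η * ⟪g, c⟫ + L * η ^ 2 / 2 * ‖c‖ ^ 2)
      + (-η) * ⟪g, n ω⟫) μ := (integrable_const _).add (hint1.const_mul _)
  have hi2 : Integrable (fun ω => ((F w - η * ⟪g, c⟫ + L * η ^ 2 / 2 * ‖c‖ ^ 2)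
      + (-η) * ⟪g, n ω⟫) + (L * η ^ 2) * ⟪c, n ω⟫) μ := hi1.add (hint2.const_mul _)
  have hRHS_val : (∫ ω, ((F w - η * ⟪g, c⟫ + L * η ^ 2 / 2 * ‖c‖ ^ 2)
      + (-η) * ⟪g, n ω⟫ + (L * η ^ 2) * ⟪c, n ω⟫ + (L * η ^ 2 / 2) * ‖n ω‖ ^ 2) ∂μ)
      = (F w - η * ⟪g, c⟫ + L * η ^ 2 / 2 * ‖c‖ ^ 2)
      + (L * η ^ 2 / 2) * ∫ ω, ‖n ω‖ ^ 2 ∂μ := by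
    rw [integral_add hi2 (hn_sq_int.const_mul _),
      integral_add hi1 (hint2.const_mul _),
      integral_add (integrable_const _) (hint1.const_mul _),
      integral_const, integral_const_mul, integral_const_mul, integral_const_mul,
      hzero1, hzero2]
    simp
  rw [hRHS_val] at hmono
  -- bound the noise term
  have hvar_bound : (L * η ^ 2 / 2) * ∫ ω, ‖n ω‖ ^ 2 ∂μ
      ≤ (L * η ^ 2 / 2) * (M * ‖c‖ ^ 2 + σ2) := by
    apply mul_le_mul_of_nonneg_left hn_var
    positivity
  -- step size bound: η * ((M+1) * L) ≤ 1
  have hML : 0 < (M + 1) * L := by positivity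
  have hstep : η * ((M + 1) * L) ≤ 1 := by
    rw [div_eq_mul_inv, one_mul] at hη
    calc η * ((M + 1) * L) ≤ ((M + 1) * L)⁻¹ * ((M + 1) * L) :=
          mul_le_mul_of_nonneg_right hη hML.le
      _ = 1 := inv_mul_cancel₀ hML.ne'
  -- key quadratic bound
  have hquad : L * η ^ 2 / 2 * ‖c‖ ^ 2 + (L * η ^ 2 / 2) * (M * ‖c‖ ^ 2 + σ2)
      ≤ η / 2 * ‖c‖ ^ 2 + η ^ 2 * L / 2 * σ2 := by
    have hc2 : 0 ≤ ‖c‖ ^ 2 := sq_nonneg _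
    nlinarith [mul_le_mul_of_nonneg_right hstep (mul_nonneg hη0.le hc2)]
  -- inner product expansions
  have hexp1 : ⟪g, c⟫ = ‖g‖ ^ 2 + ⟪g, b⟫ := by
    rw [hc, inner_add_right, real_inner_self_eq_norm_sq]
  have hexp2 : ‖c‖ ^ 2 = ‖g‖ ^ 2 + 2 * ⟪g, b⟫ + ‖b‖ ^ 2 := norm_add_sq_real g b
  have hfinal : - η * ⟪g, c⟫ + η / 2 * ‖c‖ ^ 2
      ≤ η * (m - 1) / 2 * ‖g‖ ^ 2 + η / 2 * ζ2 := by
    rw [hexp1, hexp2]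
    nlinarith [hη0.le]
  linarith [hmono, hvar_bound, hquad, hfinal]
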